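/- Exchange property for forests in the same component: let F and O be two forests (edge sets of a graph) whose edges are contained in a common connected component with vertex set T of the forest F. Then there exists an injective map φ from the edges of O[T] to the edges of F[T] such that each edge xy of O[T] is mapped to an edge lying on the unique x–y path in F[T]. -/

import Mathlib

open scoped Classical

/-- `e` is incident to vertex `v`. -/
def Inc {V ε : Type*} (ends : ε → V × V) (e : ε) (v : V) : Prop :=
  (ends e).1 = v ∨ (ends e).2 = v

/-- `e` joins the vertices `u` and `v`. -/
def Joins {V ε : Type*} (ends : ε → V × V) (e : ε) (u v : V) : Prop :=
  ends e = (u, v) ∨ ends e = (v, u)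

/-- A cycle of length `n` in the edge set `F` of a multigraph. -/
def IsCycleIn {V ε : Type*} (ends : ε → V × V) (F : Finset ε) (n : ℕ) : Prop :=
  ∃ (vs : ZMod n → V) (es : ZMod n → ε), Function.Injective vs ∧ Function.Injective es ∧
    ∀ i : ZMod n, es i ∈ F ∧ Joins ends (es i) (vs i) (vs (i + 1))

/-- `F` is a forest with bundles: no cycle on at least three vertices. -/
def IsForestWithBundles {V ε : Type*} (ends : ε → V × V) (F : Finset ε) : Prop :=
  ¬ ∃ n : ℕ, 3 ≤ n ∧ IsCycleIn ends F n

/-- `F` is properly colored: two distinct edges of `F` sharing an endpoint have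
distinct colors. -/
def ProperlyColored {V ε C : Type*} (ends : ε → V × V) (c : ε → C) (F : Finset ε) : Prop :=
  ∀ e ∈ F, ∀ f ∈ F, e ≠ f → (∃ v, Inc ends e v ∧ Inc ends f v) → c e ≠ c f

/-- `F` is a properly colored forest with bundles. -/
def PCFB {V ε C : Type*} (ends : ε → V × V) (c : ε → C) (F : Finset ε) : Prop :=
  IsForestWithBundles ends F ∧ ProperlyColored ends c F

/-- There is a `u`–`v` path of length `n` in the support graph of `F`. -/
def SuppPath {V ε : Type*} (ends : ε → V × V) (F : Finset ε) (u v : V) (n : ℕ) : Prop :=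
  ∃ vs : Fin (n + 1) → V, Function.Injective vs ∧ vs 0 = u ∧ vs (Fin.last n) = v ∧
    ∀ i : Fin n, ∃ e ∈ F, Joins ends e (vs i.castSucc) (vs i.succ)

/-- `F` is a forest: it contains no cycle (of any length). -/
def IsForest {V ε : Type*} (ends : ε → V × V) (F : Finset ε) : Prop :=
  ∀ n : ℕ, 1 ≤ n → ¬ IsCycleIn ends F n

/-- `x` and `y` are connected by a walk using edges of `F`. -/
def ConnIn {V ε : Type*} (ends : ε → V × V) (F : Finset ε) (x y : V) : Prop :=
  ∃ n : ℕ, ∃ vs : Fin (n + 1) → V, vs 0 = x ∧ vs (Fin.last n) = y ∧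
    ∀ i : Fin n, ∃ e ∈ F, Joins ends e (vs i.castSucc) (vs i.succ)

namespace ForestAux

variable {V ε : Type*} {ends : ε → V × V} [DecidableEq ε]

def Rel (ends : ε → V × V) (E : Finset ε) (a b : V) : Prop :=
  ∃ e ∈ E, Joins ends e a b

lemma joins_symm {e : ε} {u v : V} (h : Joins ends e u v) : Joins ends e v u := Or.symm h

lemma rel_symm (E : Finset ε) : Symmetric (Rel ends E) := by
  rintro a b ⟨e, he, h⟩; exact ⟨e, he, joins_symm h⟩

lemma joins_cases {e : ε} {a b c d : V} (h1 : Joins ends e a b) (h2 : Joins ends e c d) :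
    (a = c ∧ b = d) ∨ (a = d ∧ b = c) := by
  rcases h1 with h1 | h1 <;> rcases h2 with h2 | h2 <;>
    rw [h1] at h2 <;> obtain ⟨rfl, rfl⟩ := Prod.mk.injEq .. ▸ h2 <;> simp

private lemma walk_rtg {E : Finset ε} : ∀ (n : ℕ) (vs : Fin (n + 1) → V),
    (∀ i : Fin n, Rel ends E (vs i.castSucc) (vs i.succ)) →
    Relation.ReflTransGen (Rel ends E) (vs 0) (vs (Fin.last n))
  | 0, vs, _ => by simp [Fin.last]; exact Relation.ReflTransGen.refl
  | n + 1, vs, h => by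
    have ih := walk_rtg n (fun i => vs i.castSucc) (fun i => by
      have := h i.castSucc
      exact this)
    simp only [Fin.castSucc_zero] at ih
    have last_step := h (Fin.last n)
    rw [Fin.succ_last] at last_step
    exact ih.tail last_step

private lemma rtg_connIn {E : Finset ε} {x y : V} (h : Relation.ReflTransGen (Rel ends E) x y) :
    ConnIn ends E x y := by
  induction h with
  | refl => exact ⟨0, fun _ => x, rfl, rfl, fun i => i.elim0⟩
  | @tail b c hab hbc ih =>
    obtain ⟨n, vs, h0, hl, hstep⟩ := ih
    obtain ⟨e, he, hj⟩ := hbc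
    refine ⟨n + 1, Fin.snoc vs c, ?_, ?_, ?_⟩
    · rw [show (0 : Fin (n+2)) = Fin.castSucc 0 by rfl, Fin.snoc_castSucc]; exact h0
    · simp
    · intro i
      rcases eq_or_ne i (Fin.last n) with rfl | hi
      · refine ⟨e, he, ?_⟩
        rw [Fin.succ_last, Fin.snoc_last, Fin.snoc_castSucc, hl]
        exact hj
      · have hlt : (i : ℕ) < n := lt_of_le_of_ne (Nat.lt_succ_iff.mp i.isLt)
          (fun h => hi (Fin.ext h))
        set j : Fin n := ⟨i, hlt⟩ with hjdef
        obtain ⟨e', he', hj'⟩ := hstep j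
        refine ⟨e', he', ?_⟩
        have h1 : i.castSucc = (j.castSucc).castSucc := by simp [hjdef]
        have h2 : i.succ = (j.succ).castSucc := by
          apply Fin.ext; simp [hjdef]
        rw [h1, h2, Fin.snoc_castSucc, Fin.snoc_castSucc]
        exact hj'


lemma connIn_iff_rtg {E : Finset ε} {x y : V} :
    ConnIn ends E x y ↔ Relation.ReflTransGen (Rel ends E) x y := by
  constructor
  · rintro ⟨n, vs, h0, hl, hstep⟩
    have := walk_rtg n vs hstep
    rwa [h0, hl] at this
  · exact rtg_connIn

lemma conn_mono {E E' : Finset ε} (h : E ⊆ E') {x y : V} (hc : ConnIn ends E x y) :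
    ConnIn ends E' x y := by
  rw [connIn_iff_rtg] at *
  exact Relation.ReflTransGen.mono (fun a b ⟨e, he, hj⟩ => ⟨e, h he, hj⟩) _ _ hc

lemma conn_symm {E : Finset ε} {x y : V} (hc : ConnIn ends E x y) : ConnIn ends E y x := by
  rw [connIn_iff_rtg] at *
  exact (@Relation.ReflTransGen.symmetric _ _ ⟨fun a b h => rel_symm E h⟩).symm _ _ hc

lemma conn_trans {E : Finset ε} {x y z : V} (h1 : ConnIn ends E x y) (h2 : ConnIn ends E y z) :
    ConnIn ends E x z := by
  rw [connIn_iff_rtg] at *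
  exact h1.trans h2

lemma conn_single {E : Finset ε} {e : ε} {a b : V} (he : e ∈ E) (hj : Joins ends e a b) :
    ConnIn ends E a b := by
  rw [connIn_iff_rtg]
  exact Relation.ReflTransGen.single ⟨e, he, hj⟩

lemma conn_replace {E E' : Finset ε}
    (h : ∀ f ∈ E, ConnIn ends E' (ends f).1 (ends f).2) {x y : V}
    (hxy : ConnIn ends E x y) : ConnIn ends E' x y := by
  rw [connIn_iff_rtg] at hxy ⊢
  have step : ∀ a b, Rel ends E a b → Relation.ReflTransGen (Rel ends E') a b := by
    rintro a b ⟨e, he, hj⟩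
    have hc := connIn_iff_rtg.mp (h e he)
    rcases hj with hj | hj
    · have h1 : (ends e).1 = a := by rw [hj]
      have h2 : (ends e).2 = b := by rw [hj]
      rwa [h1, h2] at hc
    · have h1 : (ends e).1 = b := by rw [hj]
      have h2 : (ends e).2 = a := by rw [hj]
      rw [h1, h2] at hc
      exact (@Relation.ReflTransGen.symmetric _ _ ⟨fun a b h => rel_symm E' h⟩).symm _ _ hc
  have := Relation.ReflTransGen.mono step _ _ hxy
  rwa [Relation.reflTransGen_idem] at this

lemma forest_mono {E F : Finset ε} (h : E ⊆ F) (hF : IsForest ends F) : IsForest ends E := by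
  rintro n hn ⟨vs, es, hvinj, heinj, hstep⟩
  exact hF n hn ⟨vs, es, hvinj, heinj, fun i => ⟨h (hstep i).1, (hstep i).2⟩⟩

/-- Extract an injective walk (a path) from connectivity. -/
lemma exists_inj_walk (hloopless : ∀ e : ε, (ends e).1 ≠ (ends e).2) {E : Finset ε} {u v : V}
    (h : ConnIn ends E u v) :
    ∃ n, ∃ vs : Fin (n + 1) → V, Function.Injective vs ∧ vs 0 = u ∧ vs (Fin.last n) = v ∧
      ∀ i : Fin n, ∃ e ∈ E, Joins ends e (vs i.castSucc) (vs i.succ) := by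
  classical
  set G : SimpleGraph V := SimpleGraph.fromRel (Rel ends E) with hG
  have hGr : G.Reachable u v := by
    rw [SimpleGraph.reachable_iff_reflTransGen]
    refine Relation.ReflTransGen.mono ?_ _ _ (connIn_iff_rtg.mp h)
    intro a b hab
    rw [hG, SimpleGraph.fromRel_adj]
    refine ⟨?_, Or.inl hab⟩
    obtain ⟨e, _, hj⟩ := hab
    rcases hj with h' | h' <;>
    · intro hab'
      apply hloopless e
      rw [h', hab']
  obtain ⟨w⟩ := hGr
  set p : G.Walk u v := (w.toPath : G.Path u v).1 with hp
  set l : List V := p.support with hldef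
  have hne : l ≠ [] := by
    rw [hldef]; exact p.support_ne_nil
  have hnodup : l.Nodup := w.toPath.2.support_nodup
  have hchain : List.IsChain G.Adj l := p.isChain_adj_support
  have hhead : l.get ⟨0, List.length_pos_iff.mpr hne⟩ = u := by
    have h1 : l = u :: p.support.tail := p.support_eq_cons
    rw [List.get_of_eq h1]
    simp
  have hlast : l.getLast hne = v := p.getLast_support
  set n : ℕ := l.length - 1 with hn
  have hlen : l.length = n + 1 := by
    have := List.length_pos_iff.mpr hne; omega
  refine ⟨n, fun i => l.get (Fin.cast hlen.symm i), ?_, ?_, ?_, ?_⟩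
  · exact (List.nodup_iff_injective_get.mp hnodup).comp (Fin.cast_injective _)
  · exact hhead
  · rw [List.getLast_eq_getElem] at hlast
    exact hlast
  · intro i
    have hstep := List.isChain_iff_getElem.mp hchain i (by rw [hlen]; have := i.isLt; omega)
    rw [hG, SimpleGraph.fromRel_adj] at hstep
    obtain ⟨-, hrel⟩ := hstep
    have : Rel ends E (l.get ⟨i, by omega⟩) (l.get ⟨i+1, by omega⟩) := by
      rcases hrel with h' | h'
      · exact h'
      · exact rel_symm E h'
    obtain ⟨e, he, hj⟩ := this
    refine ⟨e, he, ?_⟩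
    convert hj using 1 <;> apply congrArg <;> apply Fin.ext <;> simp


/-- An edge of a forest is a bridge between its endpoints. -/
lemma not_conn_erase (hloopless : ∀ e : ε, (ends e).1 ≠ (ends e).2) {F : Finset ε} {g : ε}
    {u v : V} (hF : IsForest ends F) (hg : g ∈ F) (hj : Joins ends g u v) :
    ¬ ConnIn ends (F.erase g) u v := by
  intro hcon
  have huv : u ≠ v := by
    rcases hj with h | h
    · intro h'; apply hloopless g; rw [h, h']
    · intro h'; apply hloopless g; rw [h, h']
  obtain ⟨n, vs, hinj, h0, hl, hstep⟩ := exists_inj_walk hloopless hcon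
  have hn : 1 ≤ n := by
    rcases Nat.eq_zero_or_pos n with rfl | h
    · exact absurd (h0 ▸ hl ▸ rfl : u = v) huv
    · exact h
  choose es hes hjs using hstep
  haveI : NeZero (n + 1) := ⟨Nat.succ_ne_zero n⟩
  haveI : Fact (1 < n + 1) := ⟨by omega⟩
  apply hF (n + 1) (by omega)
  refine ⟨fun i => vs ⟨i.val, ZMod.val_lt i⟩,
    fun i => if h : i.val < n then es ⟨i.val, h⟩ else g, ?_, ?_, ?_⟩
  · intro a b hab
    exact ZMod.val_injective _ (Fin.ext_iff.mp (hinj hab))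
  · -- injectivity of edges
    have key : ∀ (a b : Fin n), es a = es b → a = b := by
      intro a b hab
      have h1 := hjs a
      have h2 := hjs b
      rw [hab] at h1
      rcases joins_cases h1 h2 with ⟨hc, _⟩ | ⟨hc, hd⟩
      · exact Fin.castSucc_injective n (hinj hc)
      · have hc' := hinj hc
        have hd' := hinj hd
        have : (a : ℕ) = b + 1 := by
          have := Fin.ext_iff.mp hc'; simpa using this
        have : (a : ℕ) + 1 = b := by
          have := Fin.ext_iff.mp hd'; simpa using this
        omega
    intro a b hab
    simp only at hab
    split_ifs at hab with h1 h2 h2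
    · have := key _ _ hab
      exact ZMod.val_injective _ (Fin.mk.inj this)
    · exact absurd (Finset.mem_erase.mp (hes ⟨a.val, h1⟩)).1 (by rw [hab]; simp)
    · exact absurd (Finset.mem_erase.mp (hes ⟨b.val, h2⟩)).1 (by rw [← hab]; simp)
    · apply ZMod.val_injective
      have ha := ZMod.val_lt a
      have hb := ZMod.val_lt b
      omega
  · intro i
    have hval : (i + 1).val = (i.val + 1) % (n + 1) := by
      rw [ZMod.val_add, ZMod.val_one]
    by_cases h : i.val < n
    · have hv1 : (i + 1).val = i.val + 1 := by
        rw [hval]; exact Nat.mod_eq_of_lt (by omega)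
      refine ⟨?_, ?_⟩ <;> simp only [dif_pos h]
      · exact Finset.mem_of_mem_erase (hes ⟨i.val, h⟩)
      · have e1 : (⟨i.val, ZMod.val_lt i⟩ : Fin (n+1)) = (⟨i.val, h⟩ : Fin n).castSucc := by
          apply Fin.ext; simp
        have e2 : (⟨(i+1).val, ZMod.val_lt _⟩ : Fin (n+1)) = (⟨i.val, h⟩ : Fin n).succ := by
          apply Fin.ext; simp [hv1]
        rw [e1, e2]
        exact hjs ⟨i.val, h⟩
    · have hin : i.val = n := by have := ZMod.val_lt i; omega
      have hv1 : (i + 1).val = 0 := by rw [hval, hin]; exact Nat.mod_self _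
      refine ⟨?_, ?_⟩ <;> simp only [dif_neg h]
      · exact hg
      have e1 : vs ⟨i.val, ZMod.val_lt i⟩ = v := by
        rw [← hl]; apply congrArg; apply Fin.ext; simp [hin, Fin.last]
      have e2 : vs ⟨(i+1).val, ZMod.val_lt _⟩ = u := by
        rw [← h0]; apply congrArg; apply Fin.ext; simp [hv1]
      rw [e1, e2]
      exact joins_symm hj


private lemma rtg_split {E : Finset ε} {g : ε} {x y : V}
    (h : Relation.ReflTransGen (Rel ends E) x y) :
    Relation.ReflTransGen (Rel ends (E.erase g)) x y ∨
      ∃ p, Inc ends g p ∧ Relation.ReflTransGen (Rel ends (E.erase g)) x p := by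
  classical
  induction h with
  | refl => exact Or.inl Relation.ReflTransGen.refl
  | @tail b c hab hbc ih =>
    rcases ih with ih | ih
    · obtain ⟨e, he, hj⟩ := hbc
      by_cases heg : e = g
      · subst heg
        refine Or.inr ⟨b, ?_, ih⟩
        rcases hj with hj | hj
        · exact Or.inl (by rw [hj])
        · exact Or.inr (by rw [hj])
      · exact Or.inl (ih.tail ⟨e, Finset.mem_erase.mpr ⟨heg, he⟩, hj⟩)
    · exact Or.inr ih

/-- If `f` is an `x`–`y` bridge, then `x` and `y` connect to the two endpoints of `f`
in `F.erase f`. -/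
lemma bridge_split {F : Finset ε} {f : ε} {x y : V}
    (hxy : ConnIn ends F x y) (hnot : ¬ ConnIn ends (F.erase f) x y) :
    (ConnIn ends (F.erase f) x (ends f).1 ∧ ConnIn ends (F.erase f) y (ends f).2) ∨
    (ConnIn ends (F.erase f) x (ends f).2 ∧ ConnIn ends (F.erase f) y (ends f).1) := by
  have h1 := rtg_split (g := f) (connIn_iff_rtg.mp hxy)
  have h2 := rtg_split (g := f) (connIn_iff_rtg.mp (conn_symm hxy))
  rcases h1 with h1 | ⟨p, hp, h1⟩
  · exact absurd (connIn_iff_rtg.mpr h1) hnot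
  rcases h2 with h2 | ⟨q, hq, h2⟩
  · exact absurd (conn_symm (connIn_iff_rtg.mpr h2)) hnot
  have hxp : ConnIn ends (F.erase f) x p := connIn_iff_rtg.mpr h1
  have hyq : ConnIn ends (F.erase f) y q := connIn_iff_rtg.mpr h2
  have hpq : p ≠ q := by
    rintro rfl
    exact hnot (conn_trans hxp (conn_symm hyq))
  rcases hp with hp | hp <;> rcases hq with hq | hq
  · exact absurd (hp.symm.trans hq) hpq
  · exact Or.inl ⟨hp ▸ hxp, hq ▸ hyq⟩
  · exact Or.inr ⟨hp ▸ hxp, hq ▸ hyq⟩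
  · exact absurd (hp.symm.trans hq) hpq

/-- Adding an edge between two non-connected vertices keeps a forest a forest. -/
lemma isForest_insert {E : Finset ε} {g : ε} {u v : V} (hE : IsForest ends E)
    (hj : Joins ends g u v) (hcon : ¬ ConnIn ends E u v) :
    IsForest ends (insert g E) := by
  classical
  rintro n hn ⟨vs, es, hvinj, heinj, hstep⟩
  by_cases hg : ∀ i, es i ≠ g
  · exact hE n hn ⟨vs, es, hvinj, heinj, fun i =>
      ⟨((Finset.mem_insert.mp (hstep i).1).resolve_left (hg i)), (hstep i).2⟩⟩
  push_neg at hg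
  obtain ⟨i₀, hi₀⟩ := hg
  apply hcon
  haveI : NeZero n := ⟨by omega⟩
  have key : ∀ k : ℕ, k ≤ n - 1 →
      Relation.ReflTransGen (Rel ends E) (vs (i₀ + 1)) (vs (i₀ + 1 + (k : ZMod n))) := by
    intro k
    induction k with
    | zero => intro _; rw [Nat.cast_zero, add_zero]
    | succ k ihk =>
      intro hk
      have ih := ihk (by omega)
      refine ih.tail ?_
      have hstep' := hstep (i₀ + 1 + (k : ZMod n))
      have hne : es (i₀ + 1 + (k : ZMod n)) ≠ g := by
        intro hgg
        rw [← hi₀] at hgg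
        have := heinj hgg
        have h0 : ((k : ZMod n) + 1) = 0 := by
          have : i₀ + (1 + (k : ZMod n)) = i₀ + 0 := by
            rw [add_zero]; rw [← add_assoc]; exact this
          have := add_left_cancel this
          rw [← this]; ring
        rw [show ((k : ZMod n) + 1) = ((k + 1 : ℕ) : ZMod n) by push_cast; ring] at h0
        rw [ZMod.natCast_eq_zero_iff] at h0
        have := Nat.le_of_dvd (by omega) h0
        omega
      refine ⟨es (i₀ + 1 + (k : ZMod n)),
        (Finset.mem_insert.mp hstep'.1).resolve_left hne, ?_⟩
      have : i₀ + 1 + (k : ZMod n) + 1 = i₀ + 1 + ((k + 1 : ℕ) : ZMod n) := by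
        push_cast; ring
      rw [← this]
      exact hstep'.2
  have hlast := key (n - 1) le_rfl
  have hvs : vs (i₀ + 1 + ((n - 1 : ℕ) : ZMod n)) = vs i₀ := by
    congr 1
    have : ((n : ℕ) : ZMod n) = 0 := ZMod.natCast_self n
    have hn1 : (1 : ZMod n) + ((n - 1 : ℕ) : ZMod n) = 0 := by
      rw [show (1 : ZMod n) = ((1 : ℕ) : ZMod n) by push_cast; rfl, ← Nat.cast_add,
        show 1 + (n - 1) = n by omega, this]
    rw [add_assoc, hn1, add_zero]
  rw [hvs] at hlast
  have hconn : ConnIn ends E (vs (i₀ + 1)) (vs i₀) := connIn_iff_rtg.mpr hlast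
  have hjg : Joins ends g (vs i₀) (vs (i₀ + 1)) := hi₀ ▸ (hstep i₀).2
  rcases joins_cases hj hjg with ⟨h1, h2⟩ | ⟨h1, h2⟩
  · rw [h1, h2]; exact conn_symm hconn
  · rw [h1, h2]; exact hconn


/-- In a forest, two connected vertices are connected using only edges that are
bridges between them. -/
lemma conn_bridges (hloopless : ∀ e : ε, (ends e).1 ≠ (ends e).2) {x y : V} :
    ∀ F : Finset ε, IsForest ends F → ConnIn ends F x y →
      ConnIn ends (F.filter fun f => ¬ ConnIn ends (F.erase f) x y) x y := by
  classical
  intro F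
  induction F using Finset.strongInduction with
  | _ F ih =>
    intro hF hconn
    by_cases hall : ∀ f ∈ F, ¬ ConnIn ends (F.erase f) x y
    · exact conn_mono (fun f hf => Finset.mem_filter.mpr ⟨hf, hall f hf⟩) hconn
    · push_neg at hall
      obtain ⟨f₀, hf₀, hc⟩ := hall
      have ih' := ih (F.erase f₀) (Finset.erase_ssubset hf₀)
        (forest_mono (Finset.erase_subset _ _) hF) hc
      refine conn_mono ?_ ih'
      intro f hf
      rw [Finset.mem_filter] at hf ⊢
      obtain ⟨hf1, hf2⟩ := hf
      have hfF : f ∈ F := Finset.mem_of_mem_erase hf1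
      have hfne : f ≠ f₀ := Finset.ne_of_mem_erase hf1
      refine ⟨hfF, ?_⟩
      intro hcon2
      have h1 : ¬ ConnIn ends ((F.erase f).erase f₀) x y := by
        rwa [Finset.erase_right_comm] at hf2
      have hnc := not_conn_erase hloopless hF hf₀
        (Or.inl rfl : Joins ends f₀ (ends f₀).1 (ends f₀).2)
      have hsub : (F.erase f).erase f₀ ⊆ F.erase f₀ := by
        rw [Finset.erase_right_comm]; exact Finset.erase_subset _ _
      rcases bridge_split hcon2 h1 with ⟨ha, hb⟩ | ⟨ha, hb⟩
      · exact hnc (conn_trans (conn_trans (conn_symm (conn_mono hsub ha)) hc)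
          (conn_mono hsub hb))
      · exact hnc (conn_symm (conn_trans (conn_trans (conn_symm (conn_mono hsub ha)) hc)
          (conn_mono hsub hb)))

/-- The counting lemma: a forest each of whose edges has its endpoints connected in a
forest `W` has at most as many edges as `W`. -/
lemma forest_card_le (hloopless : ∀ e : ε, (ends e).1 ≠ (ends e).2) :
    ∀ (k : ℕ) (A W : Finset ε), (A \ W).card = k → IsForest ends A → IsForest ends W →
      (∀ e ∈ A, ConnIn ends W (ends e).1 (ends e).2) → A.card ≤ W.card := by
  classical
  intro k
  induction k using Nat.strong_induction_on with
  | _ k ihk =>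
    intro A W hk hA hW hconn
    by_cases hsub : A ⊆ W
    · exact Finset.card_le_card hsub
    · obtain ⟨e₀, he₀A, he₀W⟩ := Finset.not_subset.mp hsub
      have hjoin : Joins ends e₀ (ends e₀).1 (ends e₀).2 := Or.inl rfl
      have hconW := hconn e₀ he₀A
      set S := W.filter (fun f => ¬ ConnIn ends (W.erase f) (ends e₀).1 (ends e₀).2) with hS
      have hSconn : ConnIn ends S (ends e₀).1 (ends e₀).2 :=
        conn_bridges hloopless W hW hconW
      have hnotA : ¬ S ⊆ A.erase e₀ := by
        intro hsubS
        exact not_conn_erase hloopless hA he₀A hjoin (conn_mono hsubS hSconn)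
      obtain ⟨f, hfS, hfA'⟩ := Finset.not_subset.mp hnotA
      have hfW : f ∈ W := (Finset.mem_filter.mp hfS).1
      have hbr : ¬ ConnIn ends (W.erase f) (ends e₀).1 (ends e₀).2 :=
        (Finset.mem_filter.mp hfS).2
      have hfe₀ : f ≠ e₀ := fun h => he₀W (h ▸ hfW)
      have hfA : f ∉ A := fun h => hfA' (Finset.mem_erase.mpr ⟨hfe₀, h⟩)
      set W' := insert e₀ (W.erase f) with hW'def
      have he₀Wf : e₀ ∉ W.erase f := fun h => he₀W (Finset.mem_of_mem_erase h)
      have hWf : IsForest ends (W.erase f) := forest_mono (Finset.erase_subset _ _) hW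
      have hW' : IsForest ends W' := isForest_insert hWf hjoin hbr
      have hsplit := bridge_split hconW hbr
      have he₀W' : e₀ ∈ W' := Finset.mem_insert_self _ _
      have hbase : ConnIn ends W' (ends e₀).1 (ends e₀).2 := conn_single he₀W' hjoin
      have herase : W.erase f ⊆ W' := Finset.subset_insert _ _
      have htrans : ∀ h ∈ W, ConnIn ends W' (ends h).1 (ends h).2 := by
        intro h hh
        by_cases hhf : h = f
        · subst hhf
          rcases hsplit with ⟨ha, hb⟩ | ⟨ha, hb⟩
          · exact conn_trans (conn_trans (conn_symm (conn_mono herase ha)) hbase)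
              (conn_mono herase hb)
          · exact conn_symm (conn_trans (conn_trans (conn_symm (conn_mono herase ha)) hbase)
              (conn_mono herase hb))
        · exact conn_single (herase (Finset.mem_erase.mpr ⟨hhf, hh⟩)) (Or.inl rfl)
      have hconn' : ∀ e ∈ A, ConnIn ends W' (ends e).1 (ends e).2 :=
        fun e he => conn_replace htrans (hconn e he)
      have hcard : W'.card = W.card := by
        rw [hW'def, Finset.card_insert_of_notMem he₀Wf, Finset.card_erase_of_mem hfW]
        have : 0 < W.card := Finset.card_pos.mpr ⟨f, hfW⟩
        omega
      have hdiff : (A \ W').card < k := by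
        rw [← hk]
        apply Finset.card_lt_card
        constructor
        · intro e he
          rw [Finset.mem_sdiff] at he ⊢
          obtain ⟨heA, heW'⟩ := he
          refine ⟨heA, ?_⟩
          intro heW
          apply heW'
          rw [hW'def]
          have hef : e ≠ f := fun h => hfA (h ▸ heA)
          exact Finset.mem_insert_of_mem (Finset.mem_erase.mpr ⟨hef, heW⟩)
        · intro hcontra
          have h1 : e₀ ∈ A \ W := Finset.mem_sdiff.mpr ⟨he₀A, he₀W⟩
          have h2 := hcontra h1
          rw [Finset.mem_sdiff] at h2
          exact h2.2 he₀W'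
      calc A.card ≤ W'.card := ihk _ hdiff A W' rfl hA hW' hconn'
        _ = W.card := hcard

end ForestAux

/-- Exchange property for forests inside one component: if `F` and `O` are forests and
all edges of `O` lie inside the vertex set `T` of a connected component of `F`, then
there is an injection `φ` from the edges of `O` into the edges of `F` induced on `T`
such that each edge `e = xy` of `O` is mapped to an edge of `F` lying on the unique
`x`–`y` path in `F` (i.e. an edge whose removal disconnects `x` from `y` in `F`). -/


theorem forest_exchange_in_component {V ε : Type*} [DecidableEq ε]
    (ends : ε → V × V) (hloopless : ∀ e : ε, (ends e).1 ≠ (ends e).2)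
    (F O : Finset ε) (hF : IsForest ends F) (hO : IsForest ends O)
    (T : Set V) (x₀ : V) (hx₀ : x₀ ∈ T)
    (hT : T = {y : V | ConnIn ends F x₀ y})
    (hOT : ∀ e ∈ O, (ends e).1 ∈ T ∧ (ends e).2 ∈ T) :
    ∃ φ : ε → ε, Set.InjOn φ ↑O ∧
      ∀ e ∈ O, φ e ∈ F ∧ (ends (φ e)).1 ∈ T ∧ (ends (φ e)).2 ∈ T ∧
        ConnIn ends F (ends e).1 (ends e).2 ∧
        ¬ ConnIn ends (F.erase (φ e)) (ends e).1 (ends e).2 := by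
  classical
  have hxT : ∀ x ∈ T, ConnIn ends F x₀ x := by
    intro x hx; rw [hT] at hx; exact hx
  have hx : ∀ e ∈ O, ConnIn ends F (ends e).1 (ends e).2 := by
    intro e he
    obtain ⟨h1, h2⟩ := hOT e he
    exact ForestAux.conn_trans (ForestAux.conn_symm (hxT _ h1)) (hxT _ h2)
  set t : {e // e ∈ O} → Finset ε := fun a =>
    F.filter fun f => ¬ ConnIn ends (F.erase f) (ends a.1).1 (ends a.1).2 with ht
  have hall : ∀ s : Finset {e // e ∈ O}, s.card ≤ (s.biUnion t).card := by
    intro s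
    have hAcard : (s.image (fun a => a.1)).card = s.card :=
      Finset.card_image_of_injective s Subtype.val_injective
    rw [← hAcard]
    apply ForestAux.forest_card_le hloopless
      (((s.image (fun a => a.1)) \ (s.biUnion t)).card) _ _ rfl
    · refine ForestAux.forest_mono ?_ hO
      intro e he
      obtain ⟨a, _, rfl⟩ := Finset.mem_image.mp he
      exact a.2
    · refine ForestAux.forest_mono ?_ hF
      intro e he
      obtain ⟨a, _, hae⟩ := Finset.mem_biUnion.mp he
      exact (Finset.mem_filter.mp hae).1
    · intro e he
      obtain ⟨a, ha, rfl⟩ := Finset.mem_image.mp he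
      refine ForestAux.conn_mono ?_ (ForestAux.conn_bridges hloopless F hF (hx a.1 a.2))
      intro f hf
      exact Finset.mem_biUnion.mpr ⟨a, ha, hf⟩
  obtain ⟨f, hfinj, hf⟩ := (Finset.all_card_le_biUnion_card_iff_exists_injective t).mp hall
  refine ⟨fun e => if h : e ∈ O then f ⟨e, h⟩ else e, ?_, ?_⟩
  · intro a ha b hb hab
    rw [Finset.mem_coe] at ha hb
    simp only [dif_pos ha, dif_pos hb] at hab
    exact Subtype.ext_iff.mp (hfinj hab)
  · intro e he
    have hfe := hf ⟨e, he⟩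
    rw [ht, Finset.mem_filter] at hfe
    obtain ⟨hmemF, hbridge⟩ := hfe
    simp only [dif_pos he]
    refine ⟨hmemF, ?_, ?_, hx e he, hbridge⟩
    all_goals {
      have hsplit := ForestAux.bridge_split (hx e he) hbridge
      have h1T : ConnIn ends F x₀ (ends e).1 := hxT _ (hOT e he).1
      have h2T : ConnIn ends F x₀ (ends e).2 := hxT _ (hOT e he).2
      have hsub := Finset.erase_subset (f ⟨e, he⟩) F
      rw [hT]
      rcases hsplit with ⟨ha, hb⟩ | ⟨ha, hb⟩ <;>
      first
        | exact ForestAux.conn_trans h1T (ForestAux.conn_mono hsub ha)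
        | exact ForestAux.conn_trans h2T (ForestAux.conn_mono hsub ha)
        | exact ForestAux.conn_trans h1T (ForestAux.conn_mono hsub hb)
        | exact ForestAux.conn_trans h2T (ForestAux.conn_mono hsub hb)
    }
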